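/- Let b_0 = 0, b_{2n} = 4b_n, b_{2n+1} = 4b_n + 2. Then liminf_{n→∞} b_n/n^2 = 2/3, limsup_{n→∞} b_n/n^2 = 2, and the set {b_n/n^2 : n ≥ 1} is dense in [2/3, 2]. -/

import Mathlib

open Filter

section Aux

variable {b : ℕ → ℕ} (hb0 : b 0 = 0)
    (hbe : ∀ n, b (2 * n) = 4 * b n) (hbo : ∀ n, b (2 * n + 1) = 4 * b n + 2)

include hb0 hbe hbo

lemma b_ub' : ∀ n, b n ≤ 2 * n ^ 2 := by
  intro n
  induction n using Nat.strong_induction_on with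
  | _ n ih =>
    match n with
    | 0 => simp [hb0]
    | 1 =>
      have : b 1 = 2 := by have := hbo 0; simpa [hb0] using this
      simp [this]
    | n + 2 =>
      rcases Nat.even_or_odd (n + 2) with ⟨m, hm⟩ | ⟨m, hm⟩
      · have hm' : n + 2 = 2 * m := by omega
        have h1 : m < n + 2 := by omega
        have := ih m h1
        rw [hm', hbe m]; nlinarith
      · have h1 : m < n + 2 := by omega
        have := ih m h1
        rw [hm, hbo m]; nlinarith

lemma b_lb' : ∀ n, 1 ≤ n → 2 * n ^ 2 + 4 * n ≤ 3 * b n := by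
  intro n
  induction n using Nat.strong_induction_on with
  | _ n ih =>
    match n with
    | 0 => omega
    | 1 =>
      intro _
      have : b 1 = 2 := by have := hbo 0; simpa [hb0] using this
      simp [this]
    | n + 2 =>
      intro _
      rcases Nat.even_or_odd (n + 2) with ⟨m, hm⟩ | ⟨m, hm⟩
      · have hm' : n + 2 = 2 * m := by omega
        have h1 : m < n + 2 := by omega
        have := ih m h1 (by omega)
        rw [hm', hbe m]; nlinarith
      · have h1 : m < n + 2 := by omega
        have := ih m h1 (by omega)
        rw [hm, hbo m]; nlinarith

lemma b_pow2' : ∀ k, b (2 ^ k) = 2 * 4 ^ k := by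
  intro k
  induction k with
  | zero => have := hbo 0; simpa [hb0] using this
  | succ k ih =>
    have : (2:ℕ) ^ (k+1) = 2 * 2 ^ k := by ring
    rw [this, hbe, ih]; ring

omit hbe in
lemma b_pow2m1' : ∀ k, 3 * b (2 ^ k - 1) = 2 * (4 ^ k - 1) := by
  intro k
  induction k with
  | zero => simp [hb0]
  | succ k ih =>
    have h1 : (2:ℕ) ^ (k+1) - 1 = 2 * (2 ^ k - 1) + 1 := by
      have : 1 ≤ (2:ℕ)^k := Nat.one_le_two_pow
      omega
    have h4 : 1 ≤ (4:ℕ)^k := Nat.one_le_pow _ _ (by norm_num)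
    rw [h1, hbo]
    have : (4:ℕ)^(k+1) = 4 * 4^k := by ring
    omega

end Aux

/-- lower endpoint of the interval attached to `n` -/
noncomputable def Lf (b : ℕ → ℕ) (n : ℕ) : ℝ := ((b n : ℝ) + 2 / 3) / ((n : ℝ) + 1) ^ 2
/-- ratio -/
noncomputable def Rf (b : ℕ → ℕ) (n : ℕ) : ℝ := (b n : ℝ) / (n : ℝ) ^ 2

noncomputable def dseq (b : ℕ → ℕ) (x : ℝ) : ℕ → ℕ
  | 0 => 1
  | k + 1 =>
    let m := dseq b x k
    if Lf b (2 * m) ≤ x then 2 * m else 2 * m + 1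

section Aux2

variable {b : ℕ → ℕ} (hb0 : b 0 = 0)
    (hbe : ∀ n, b (2 * n) = 4 * b n) (hbo : ∀ n, b (2 * n + 1) = 4 * b n + 2)

include hb0 hbe hbo

lemma dseq_invariant (x : ℝ) (hx : x ∈ Set.Icc (2 / 3 : ℝ) 2) :
    ∀ k, 1 ≤ dseq b x k ∧ Lf b (dseq b x k) ≤ x ∧ x ≤ Rf b (dseq b x k) := by
  have hb1 : b 1 = 2 := by have := hbo 0; simpa [hb0] using this
  intro k
  induction k with
  | zero =>
    refine ⟨le_refl _, ?_, ?_⟩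
    · show ((b 1 : ℝ) + 2/3) / ((1:ℕ) + 1 : ℝ) ^ 2 ≤ x
      rw [hb1]
      push_cast
      norm_num
      exact hx.1
    · show x ≤ (b 1 : ℝ) / ((1:ℕ) : ℝ) ^ 2
      rw [hb1]; push_cast; norm_num; exact hx.2
  | succ k ih =>
    obtain ⟨h1, hL, hR⟩ := ih
    set m := dseq b x k with hm
    have hmpos : (0:ℝ) < (m:ℝ) := by exact_mod_cast h1
    have hstep : dseq b x (k+1) = if Lf b (2*m) ≤ x then 2*m else 2*m+1 := rfl
    rw [hstep]
    by_cases hc : Lf b (2 * m) ≤ x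
    · rw [if_pos hc]
      refine ⟨by omega, hc, ?_⟩
      have : Rf b (2 * m) = Rf b m := by
        unfold Rf
        rw [hbe m]
        push_cast
        field_simp
        ring
      rw [this]; exact hR
    · rw [if_neg hc]
      refine ⟨by omega, ?_, ?_⟩
      · have : Lf b (2 * m + 1) = Lf b m := by
          unfold Lf
          rw [hbo m]
          push_cast
          field_simp
          ring
        rw [this]; exact hL
      · have hlt : x < Lf b (2 * m) := lt_of_not_ge hc
        refine le_of_lt (lt_of_lt_of_le hlt ?_)
        unfold Lf Rf
        rw [hbe m, hbo m]
        push_cast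
        gcongr
        norm_num

lemma gap_le (n : ℕ) (hn : 1 ≤ n) : Rf b n - Lf b n ≤ 4 / ((n:ℝ) + 1) := by
  have hub := b_ub' hb0 hbe hbo n
  unfold Rf Lf
  set N : ℝ := (n : ℝ) with hN
  set B : ℝ := (b n : ℝ) with hB
  have hN1 : (1:ℝ) ≤ N := by rw [hN]; exact_mod_cast hn
  have hB2 : B ≤ 2 * N ^ 2 := by
    rw [hB, hN]; exact_mod_cast hub
  have hB0 : (0:ℝ) ≤ B := Nat.cast_nonneg _
  rw [div_sub_div _ _ (by positivity) (by positivity), div_le_div_iff₀ (by positivity) (by positivity)]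
  nlinarith [mul_nonneg (mul_nonneg (by linarith : (0:ℝ) ≤ 2*N^2 - B) (by linarith : (0:ℝ) ≤ 2*N+1)) (by linarith : (0:ℝ) ≤ N+1), sq_nonneg N]

end Aux2

/-- `liminf bₙ/n² = 2/3`, `limsup bₙ/n² = 2`, and `{bₙ/n² : n ≥ 1}` is dense in
`[2/3, 2]`. -/
theorem b_ratio_liminf_limsup_dense (b : ℕ → ℕ) (hb0 : b 0 = 0)
    (hbe : ∀ n, b (2 * n) = 4 * b n) (hbo : ∀ n, b (2 * n + 1) = 4 * b n + 2) :
    liminf (fun n : ℕ => (b n : ℝ) / (n : ℝ) ^ 2) atTop = 2 / 3 ∧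
    limsup (fun n : ℕ => (b n : ℝ) / (n : ℝ) ^ 2) atTop = 2 ∧
    Set.Icc (2 / 3 : ℝ) 2 ⊆
      closure {x : ℝ | ∃ n : ℕ, 1 ≤ n ∧ x = (b n : ℝ) / (n : ℝ) ^ 2} := by
  have hRfeq : (fun n : ℕ => (b n : ℝ) / (n : ℝ) ^ 2) = Rf b := rfl
  rw [hRfeq]
  set u : ℕ → ℝ := Rf b with hu
  -- basic bounds
  have hposu : ∀ n, 0 ≤ u n := fun n => by
    show (0:ℝ) ≤ (b n : ℝ) / (n : ℝ) ^ 2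
    positivity
  have hub2 : ∀ n, u n ≤ 2 := by
    intro n
    show (b n : ℝ) / (n : ℝ) ^ 2 ≤ 2
    rcases Nat.eq_zero_or_pos n with h | h
    · subst h; simp
    · rw [div_le_iff₀ (by positivity : (0:ℝ) < (n:ℝ)^2)]
      have := b_ub' hb0 hbe hbo n
      have : (b n : ℝ) ≤ 2 * (n:ℝ)^2 := by exact_mod_cast this
      linarith
  have hlb23 : ∀ n, 1 ≤ n → (2/3 : ℝ) ≤ u n := by
    intro n hn
    show (2/3 : ℝ) ≤ (b n : ℝ) / (n : ℝ) ^ 2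
    have hn' : (0:ℝ) < (n:ℝ) := by exact_mod_cast hn
    rw [le_div_iff₀ (by positivity : (0:ℝ) < (n:ℝ)^2)]
    have h := b_lb' hb0 hbe hbo n hn
    have h' : 2 * (n:ℝ)^2 + 4 * (n:ℝ) ≤ 3 * (b n : ℝ) := by exact_mod_cast h
    nlinarith
  have hBle : IsBoundedUnder (· ≤ ·) atTop u := isBoundedUnder_of ⟨2, hub2⟩
  have hBge : IsBoundedUnder (· ≥ ·) atTop u := isBoundedUnder_of ⟨0, hposu⟩
  have hpow2sq : ∀ K : ℕ, (4:ℝ)^K = ((2:ℝ)^K)^2 := by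
    intro K
    rw [show (4:ℝ) = 2^2 by norm_num, ← pow_mul, mul_comm, pow_mul]
  refine ⟨?_, ?_, ?_⟩
  · -- liminf = 2/3
    apply le_antisymm
    · apply le_of_forall_gt_imp_ge_of_dense
      intro c hc
      apply liminf_le_of_frequently_le ?_ hBge
      rw [frequently_atTop]
      intro N
      obtain ⟨k1, hk1⟩ := pow_unbounded_of_one_lt ((3*c+2)/(3*c-2)) (by norm_num : (1:ℝ) < 2)
      set K : ℕ := max (max k1 N) 1 with hK
      refine ⟨2 ^ K - 1, ?_, ?_⟩
      · have h2 : K < 2 ^ K := Nat.lt_two_pow_self (n := K)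
        have : N ≤ K := le_trans (le_max_right _ _) (le_max_left _ _)
        omega
      · set n : ℕ := 2 ^ K - 1 with hn
        have h1K : 1 ≤ K := le_max_right _ _
        have h2K : (2:ℕ) ≤ 2 ^ K := by
          calc (2:ℕ) = 2^1 := by norm_num
          _ ≤ 2^K := Nat.pow_le_pow_right (by norm_num) h1K
        set A : ℝ := (2:ℝ)^K with hA
        have hA2 : (2:ℝ) ≤ A := by
          rw [hA]
          calc (2:ℝ) = 2^1 := by norm_num
          _ ≤ 2^K := by
            apply pow_le_pow_right₀ (by norm_num) h1K
        have hc' : (0:ℝ) < 3*c - 2 := by linarith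
        have hA1 : (3*c+2)/(3*c-2) < A := by
          rw [hA]
          refine lt_of_lt_of_le hk1 ?_
          apply pow_le_pow_right₀ (by norm_num)
          exact le_trans (le_max_left _ _) (le_max_left _ _)
        have hA1' : 3*c + 2 < (3*c-2) * A := by
          rw [div_lt_iff₀ hc'] at hA1
          linarith [hA1]
        have hcast : (n:ℝ) = A - 1 := by
          rw [hn, hA]
          push_cast [Nat.cast_sub (by omega : 1 ≤ 2^K)]
          ring
        have hbn : 3 * (b n : ℝ) = 2 * ((4:ℝ)^K - 1) := by
          have h := b_pow2m1' hb0 hbo K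
          have h4 : 1 ≤ (4:ℕ)^K := Nat.one_le_pow _ _ (by norm_num)
          rw [hn]
          have h' := congrArg (fun t : ℕ => (t:ℝ)) h
          push_cast [Nat.cast_sub h4] at h'
          linarith
        show (b n : ℝ) / (n : ℝ) ^ 2 ≤ c
        rw [hcast, div_le_iff₀ (by nlinarith : (0:ℝ) < (A-1)^2)]
        rw [hpow2sq K, ← hA] at hbn
        nlinarith [mul_nonneg (by linarith : (0:ℝ) ≤ A - 1) (by linarith : (0:ℝ) ≤ (3*c-2)*A - (3*c+2))]
    · exact le_liminf_of_le hBle.isCoboundedUnder_ge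
        ((eventually_ge_atTop 1).mono fun n hn => hlb23 n hn)
  · -- limsup = 2
    apply le_antisymm
    · exact limsup_le_of_le hBge.isCoboundedUnder_le (Eventually.of_forall hub2)
    · apply le_limsup_of_frequently_le ?_ hBle
      rw [frequently_atTop]
      intro N
      refine ⟨2 ^ N, (Nat.lt_two_pow_self (n := N)).le, ?_⟩
      have : u (2 ^ N) = 2 := by
        show (b (2^N) : ℝ) / ((2^N : ℕ) : ℝ) ^ 2 = 2
        rw [b_pow2' hb0 hbe hbo N]
        push_cast
        rw [← hpow2sq N]
        field_simp
      rw [this]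
  · -- density
    intro x hx
    have hinv := dseq_invariant hb0 hbe hbo x hx
    set s : ℕ → ℕ := dseq b x with hs
    have hge : ∀ k, 2 ^ k ≤ s k := by
      intro k
      induction k with
      | zero => exact (hinv 0).1
      | succ k ih =>
        have hstep : s (k+1) = if Lf b (2 * s k) ≤ x then 2 * s k else 2 * s k + 1 := rfl
        have h2 : 2^(k+1) = 2 * 2^k := by ring
        rw [hstep]
        split <;> omega
    have key : ∀ k, |u (s k) - x| ≤ 4 * (1/2 : ℝ)^k := by
      intro k
      obtain ⟨h1, hL, hR⟩ := hinv k
      rw [abs_of_nonneg (by linarith : (0:ℝ) ≤ u (s k) - x)]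
      have hgap := gap_le hb0 hbe hbo (s k) h1
      have h2k : (2:ℝ)^k ≤ (s k : ℝ) + 1 := by
        have := hge k
        have : ((2:ℕ)^k : ℝ) ≤ (s k : ℝ) := by exact_mod_cast this
        push_cast at this
        linarith
      have : (4:ℝ) / ((s k : ℝ) + 1) ≤ 4 / (2:ℝ)^k :=
        div_le_div_of_nonneg_left (by norm_num) (by positivity) h2k
      have h4 : (4:ℝ) / (2:ℝ)^k = 4 * (1/2:ℝ)^k := by
        rw [one_div, inv_pow, div_eq_mul_inv]
      have hux : u (s k) - x ≤ Rf b (s k) - Lf b (s k) := by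
        have : u (s k) = Rf b (s k) := rfl
        rw [this]; linarith
      linarith [hgap, hux, h4 ▸ this]
    have h0 : Tendsto (fun k => |u (s k) - x|) atTop (nhds 0) := by
      apply squeeze_zero (fun k => abs_nonneg _) key
      have := (tendsto_pow_atTop_nhds_zero_of_lt_one (by norm_num : (0:ℝ) ≤ 1/2)
        (by norm_num : (1/2:ℝ) < 1)).const_mul (4:ℝ)
      simpa using this
    have htend : Tendsto (fun k => u (s k)) atTop (nhds x) := by
      rw [tendsto_iff_dist_tendsto_zero]
      simpa [Real.dist_eq] using h0
    exact mem_closure_of_tendsto htend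
      (Eventually.of_forall fun k => ⟨s k, (hinv k).1, rfl⟩)
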